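/- Let u be a unitary element of M = M_n(L) with entries u_{ij} ∈ L, and let w be a unitary element of M_n(ℂ). Let u' = (w* ⊗ 1_L) u (w ⊗ 1_L), i.e. the element of M whose entries are the entries of u expressed with respect to the conjugated matrix units w e_{ij} w*. Then S(ρ[U(u')]) = S(ρ[U(u)]); in particular, the entropy S(ρ[U(u)]) does not depend on the choice of matrix units of M_n(ℂ). -/

import Mathlib

open Matrix ComplexOrder

/-- The embedding `a ↦ a ⊗ 1_L` of `M_n(ℂ)` into `M_n(L)`. -/
noncomputable def incl (n : ℕ) {L : Type*} [Ring L] [Algebra ℂ L]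
    (a : Matrix (Fin n) (Fin n) ℂ) : Matrix (Fin n) (Fin n) L :=
  a.map (algebraMap ℂ L)

/-- The `n²×n²` density matrix `ρ[U(v)]` associated to the operational partition
`U(v) = (v_{ij}/√n)_{i,j}` induced by `v`:
its `((i,j),(k,l))` entry is `(1/n)·τ_L(v_{kl}* v_{ij})`. -/
noncomputable def rhoU (n : ℕ) {L : Type*} [Ring L] [StarRing L] [Algebra ℂ L]
    (τ : L →ₗ[ℂ] ℂ) (v : Matrix (Fin n) (Fin n) L) :
    Matrix (Fin n × Fin n) (Fin n × Fin n) ℂ :=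
  Matrix.of fun p q : Fin n × Fin n =>
    (n : ℂ)⁻¹ * τ (star (v q.1 q.2) * v p.1 p.2)

/-- The von Neumann entropy `S(ρ) = Σ_i η(λ_i)` of a Hermitian matrix `ρ`, where
`λ_i` are the eigenvalues of `ρ` (with multiplicity) and `η(t) = -t log t`. -/
noncomputable def vnEntropy {k : Type*} [Fintype k] [DecidableEq k]
    (ρ : Matrix k k ℂ) (hρ : ρ.IsHermitian) : ℝ :=
  ∑ i, Real.negMulLog (hρ.eigenvalues i)

open Polynomial Kronecker in
/-- The characteristic polynomial is invariant under unitary conjugation. -/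
lemma charpoly_conj_unitary {k : Type*} [Fintype k] [DecidableEq k]
    (V A : Matrix k k ℂ) (h1 : V * Vᴴ = 1) :
    (V * A * Vᴴ).charpoly = A.charpoly := by
  have key : charmatrix (V * A * Vᴴ) =
      V.map C * charmatrix A * Vᴴ.map C := by
    unfold charmatrix
    rw [RingHom.mapMatrix_apply, RingHom.mapMatrix_apply, Matrix.map_mul, Matrix.map_mul,
      mul_sub, sub_mul]
    congr 1
    have comm : Commute (Matrix.scalar k (X : ℂ[X])) (Vᴴ.map C) :=
      scalar_commute _ (fun r => Commute.all _ _) _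
    rw [mul_assoc, comm.eq, ← mul_assoc, ← Matrix.map_mul, h1]
    simp
  have hdet : (V.map (C : ℂ →+* ℂ[X])).det * (Vᴴ.map (C : ℂ →+* ℂ[X])).det = 1 := by
    rw [← det_mul, ← Matrix.map_mul, h1]
    simp
  rw [Matrix.charpoly, key, det_mul, det_mul, Matrix.charpoly]
  calc (V.map ⇑C).det * A.charmatrix.det * (Vᴴ.map ⇑C).det
      = A.charmatrix.det * ((V.map ⇑C).det * (Vᴴ.map ⇑C).det) := by ring
    _ = A.charmatrix.det := by rw [hdet, mul_one]

open Polynomial in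
/-- The characteristic polynomial of a Hermitian matrix is the product of the
linear factors corresponding to its eigenvalues. -/
lemma charpoly_eq_prod {k : Type*} [Fintype k] [DecidableEq k]
    {A : Matrix k k ℂ} (hA : A.IsHermitian) :
    A.charpoly = ∏ i, (X - C (hA.eigenvalues i : ℂ)) := by
  have hU : (hA.eigenvectorUnitary : Matrix k k ℂ) *
      star (hA.eigenvectorUnitary : Matrix k k ℂ) = 1 :=
    Unitary.mul_star_self_of_mem hA.eigenvectorUnitary.2
  conv_lhs => rw [hA.spectral_theorem, Unitary.conjStarAlgAut_apply]
  rw [Matrix.star_eq_conjTranspose] at hU ⊢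
  rw [charpoly_conj_unitary _ _ hU]
  have hdiag : charmatrix (diagonal (RCLike.ofReal ∘ hA.eigenvalues) : Matrix k k ℂ)
      = diagonal (fun i => X - C ((hA.eigenvalues i : ℝ) : ℂ)) := by
    ext i j
    by_cases h : i = j
    · subst h; simp
    · simp [h, charmatrix_apply_ne _ _ _ h, diagonal_apply_ne _ h]
  rw [Matrix.charpoly, hdiag, det_diagonal]

open Polynomial in
/-- Hermitian matrices with equal characteristic polynomials have the same multiset of
eigenvalues, hence equal sums of any function of the eigenvalues. -/
lemma sum_f_eigenvalues_eq {k : Type*} [Fintype k] [DecidableEq k]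
    {A B : Matrix k k ℂ} (hA : A.IsHermitian) (hB : B.IsHermitian)
    (h : A.charpoly = B.charpoly) (f : ℝ → ℝ) :
    ∑ i, f (hA.eigenvalues i) = ∑ i, f (hB.eigenvalues i) := by
  have hmult : Finset.univ.val.map hA.eigenvalues = Finset.univ.val.map hB.eigenvalues := by
    apply Multiset.map_injective Complex.ofReal_injective
    have hA' := charpoly_eq_prod hA
    have hB' := charpoly_eq_prod hB
    rw [hA', hB'] at h
    have key : ∀ g : k → ℝ, (∏ i, (X - C ((g i : ℝ) : ℂ))).roots
        = (Finset.univ.val.map g).map (fun r : ℝ => (r : ℂ)) := by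
      intro g
      rw [show (∏ i, (X - C ((g i : ℝ) : ℂ)))
          = (((Finset.univ.val.map g).map (fun r : ℝ => (r : ℂ))).map (fun a => X - C a)).prod by
        rw [Multiset.map_map, Multiset.map_map, Finset.prod_eq_multiset_prod]; rfl,
        Polynomial.roots_multiset_prod_X_sub_C]
    have := congrArg Polynomial.roots h
    rwa [key, key] at this
  have key : ∀ g : k → ℝ, ∑ i, f (g i) = ((Finset.univ.val.map g).map f).sum := by
    intro g
    rw [Multiset.map_map, Finset.sum_eq_multiset_sum]; rfl
  rw [key, key, hmult]

open Kronecker in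
/-- Conjugating `u` by `w ⊗ 1_L` conjugates the density matrix by the unitary
`wᴴ ⊗ wᵀ`. -/
lemma rhoU_conj {n : ℕ} {L : Type*} [Ring L] [StarRing L] [Algebra ℂ L] [StarModule ℂ L]
    (τ : L →ₗ[ℂ] ℂ) (u : Matrix (Fin n) (Fin n) L) (w : Matrix (Fin n) (Fin n) ℂ) :
    rhoU n τ (incl n (star w) * u * incl n w)
      = (wᴴ ⊗ₖ wᵀ) * rhoU n τ u * (wᴴ ⊗ₖ wᵀ)ᴴ := by
  have hu' : ∀ i j : Fin n, ((incl n (star w) * u * incl n w : Matrix (Fin n) (Fin n) L)) i j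
      = ∑ c : Fin n, ∑ d : Fin n, (starRingEnd ℂ (w c i) * w d j) • u c d := by
    intro i j
    simp only [Matrix.mul_apply, incl, Matrix.map_apply, Finset.sum_mul,
      Matrix.star_eq_conjTranspose, Matrix.conjTranspose_apply]
    rw [Finset.sum_comm]
    refine Finset.sum_congr rfl fun c _ => Finset.sum_congr rfl fun d _ => ?_
    rw [mul_assoc, ← Algebra.commutes (w d j) (u c d), ← mul_assoc, ← _root_.map_mul,
      ← Algebra.smul_def]
    rfl
  ext ⟨i, j⟩ ⟨k, l⟩
  simp only [rhoU, Matrix.of_apply, hu', Matrix.mul_apply, Matrix.conjTranspose_apply,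
    Matrix.kroneckerMap_apply, Matrix.transpose_apply,
    star_sum, star_smul, Finset.sum_mul, Finset.mul_sum, smul_mul_smul_comm,
    map_sum, LinearMap.map_smul, smul_eq_mul, Complex.star_def, star_mul', _root_.map_mul,
    Complex.conj_conj]
  conv_rhs => rw [Finset.sum_comm]
  simp only [Fintype.sum_prod_type]
  refine Finset.sum_congr rfl fun c _ => Finset.sum_congr rfl fun d _ =>
    Finset.sum_congr rfl fun a _ => Finset.sum_congr rfl fun b _ => ?_
  ring

open Kronecker in
/-- Let `u` be a unitary of `M = M_n(L)`, `w` a unitary of `M_n(ℂ)`, and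
`u' = (w* ⊗ 1_L) u (w ⊗ 1_L)` (the element whose entries are the entries of `u` with
respect to the conjugated matrix units `w e_{ij} w*`). Then
`S(ρ[U(u')]) = S(ρ[U(u)])`: the entropy does not depend on the choice of matrix
units of `M_n(ℂ)`. -/
theorem entropy_invariant_under_change_of_matrix_units
    {n : ℕ} {L : Type*} [Ring L] [StarRing L] [Algebra ℂ L] [StarModule ℂ L]
    [FiniteDimensional ℂ L]
    (τ : L →ₗ[ℂ] ℂ)
    (hτ1 : τ 1 = 1)
    (hτtr : ∀ x y : L, τ (x * y) = τ (y * x))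
    (hτstar : ∀ x : L, τ (star x) = starRingEnd ℂ (τ x))
    (hτpos : ∀ x : L, 0 ≤ τ (star x * x))
    (hτfaithful : ∀ x : L, τ (star x * x) = 0 → x = 0)
    (u : Matrix (Fin n) (Fin n) L)
    (hu : star u * u = 1) (hu' : u * star u = 1)
    (w : Matrix (Fin n) (Fin n) ℂ)
    (hw : star w * w = 1) (hw' : w * star w = 1)
    (h₁ : (rhoU n τ (incl n (star w) * u * incl n w)).IsHermitian)
    (h₂ : (rhoU n τ u).IsHermitian) :
    vnEntropy (rhoU n τ (incl n (star w) * u * incl n w)) h₁ =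
      vnEntropy (rhoU n τ u) h₂ := by
  have hwH : wᴴ * w = 1 := by rw [← Matrix.star_eq_conjTranspose]; exact hw
  have hVH : (wᴴ ⊗ₖ wᵀ)ᴴ = w ⊗ₖ wᴴᵀ := by
    ext p q
    simp [Matrix.conjTranspose_apply, Matrix.kroneckerMap_apply, mul_comm]
  have hV1 : (wᴴ ⊗ₖ wᵀ) * (wᴴ ⊗ₖ wᵀ)ᴴ = 1 := by
    rw [hVH, ← Matrix.mul_kronecker_mul, hwH, show wᵀ * wᴴᵀ = 1 by
      rw [← Matrix.transpose_mul, hwH, Matrix.transpose_one], Matrix.one_kronecker_one]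
  have hch : (rhoU n τ (incl n (star w) * u * incl n w)).charpoly = (rhoU n τ u).charpoly := by
    rw [rhoU_conj τ u w]
    exact charpoly_conj_unitary _ _ hV1
  exact sum_f_eigenvalues_eq h₁ h₂ hch Real.negMulLog
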